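/- Let Δt > 0 with ρΔt ∈ (0, 1), and let β > 0 and β_Σ > 0 satisfy the equation 0 = (1−ρΔt)β²β_Σ² − (2−ρΔt + β_Σγ Δt)(σ_K/σ_S)²ββ_Σ + (σ_K/σ_S)⁴(1−βγΔt). Define λ := β_Σσ_S²/(σ_K² + β_Σ²σ_S²) and φ := 1 − λβ/(1 − λβ_Σ), and assume λβ_Σ < 1 and φ ∈ (0, 1). Let (E, ζ) be the unique pair with E > 0, ζ > 0 satisfying E/(1−ρΔt) = 2λζ and ζ = (E + γΔt)/(E + γΔt + 2λ), and define F by F/(1−ρΔt) = (λφζ + (1−ζ)(1−φ)γΔt)/(φ + (1−φ)(ζ(1−ρΔt) + ρΔt)). Then F + γΔt = λφ/(1−φ). -/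

import Mathlib

/-- Lemma F-identity: under the equilibrium equation for `β` given
`β_Σ`, with `λ = β_Σσ_S²/(σ_K²+β_Σ²σ_S²)`, `φ = 1 − λβ/(1−λβ_Σ)`, `λβ_Σ < 1`,
`φ ∈ (0,1)`, and `(E, ζ)` the unique positive pair with `E/(1−ρΔt) = 2λζ`,
`ζ = (E+γΔt)/(E+γΔt+2λ)`, the coefficient `F` defined by
`F/(1−ρΔt) = (λφζ + (1−ζ)(1−φ)γΔt)/(φ + (1−φ)(ζ(1−ρΔt) + ρΔt))`
satisfies `F + γΔt = λφ/(1−φ)`. -/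
theorem stmt16 (σS σK γ ρ Δt β βSum lam φ E ζ F : ℝ)
    (hσS : 0 < σS) (hσK : 0 < σK) (hγ : 0 < γ) (hρ : 0 < ρ)
    (hΔt : 0 < Δt) (hρΔt : ρ * Δt < 1)
    (hβ : 0 < β) (hβSum : 0 < βSum)
    (heq : 0 = (1 - ρ * Δt) * β ^ 2 * βSum ^ 2
        - (2 - ρ * Δt + βSum * γ * Δt) * (σK / σS) ^ 2 * β * βSum
        + (σK / σS) ^ 4 * (1 - β * γ * Δt))
    (hlam : lam = βSum * σS ^ 2 / (σK ^ 2 + βSum ^ 2 * σS ^ 2))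
    (hφ : φ = 1 - lam * β / (1 - lam * βSum))
    (hlamβSum : lam * βSum < 1) (hφ0 : 0 < φ) (hφ1 : φ < 1)
    (hE : 0 < E) (hζ : 0 < ζ)
    (hEζ : E / (1 - ρ * Δt) = 2 * lam * ζ)
    (hζeq : ζ = (E + γ * Δt) / (E + γ * Δt + 2 * lam))
    (hF : F / (1 - ρ * Δt)
        = (lam * φ * ζ + (1 - ζ) * (1 - φ) * γ * Δt)
            / (φ + (1 - φ) * (ζ * (1 - ρ * Δt) + ρ * Δt))) :
    F + γ * Δt = lam * φ / (1 - φ) := by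

  have hσS' : (σS:ℝ) ≠ 0 := ne_of_gt hσS
  have hσK' : (σK:ℝ) ≠ 0 := ne_of_gt hσK
  have hS : (0:ℝ) < σK ^ 2 + βSum ^ 2 * σS ^ 2 := by positivity
  have hS' : (σK:ℝ) ^ 2 + βSum ^ 2 * σS ^ 2 ≠ 0 := ne_of_gt hS
  have h1r : (0:ℝ) < 1 - ρ * Δt := by linarith
  have h1r' : (1:ℝ) - ρ * Δt ≠ 0 := ne_of_gt h1r
  have h1lβ : (0:ℝ) < 1 - lam * βSum := by linarith
  have h1lβ' : (1:ℝ) - lam * βSum ≠ 0 := ne_of_gt h1lβ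
  have h1φ : (0:ℝ) < 1 - φ := by linarith
  have h1φ' : (1:ℝ) - φ ≠ 0 := ne_of_gt h1φ
  have hlam0 : (0:ℝ) < lam := by rw [hlam]; positivity
  -- multiply phi definition through
  have hlamβ : lam * β = (1 - φ) * (1 - lam * βSum) := by
    rw [hφ]; field_simp; ring
  -- lam definition cleared
  have hlam2 : lam * (σK ^ 2 + βSum ^ 2 * σS ^ 2) = βSum * σS ^ 2 := by
    rw [hlam]; field_simp
  -- key linear relation
  have hx : (1 - φ) * σK ^ 2 = β * βSum * σS ^ 2 := by
    linear_combination β * hlam2 - (σK ^ 2 + βSum ^ 2 * σS ^ 2) * hlamβ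
      + (1 - φ) * βSum * hlam2
  -- clear denominators in the equilibrium equation
  have heq2 : 0 = (1 - ρ * Δt) * β ^ 2 * βSum ^ 2 * σS ^ 4
      - (2 - ρ * Δt + βSum * γ * Δt) * σK ^ 2 * σS ^ 2 * β * βSum
      + σK ^ 4 * (1 - β * γ * Δt) := by
    have h4 : ((σK / σS) : ℝ) ^ 4 = σK ^ 4 / σS ^ 4 := by rw [div_pow]
    have h2 : ((σK / σS) : ℝ) ^ 2 = σK ^ 2 / σS ^ 2 := by rw [div_pow]
    rw [h2, h4] at heq
    field_simp at heq
    have h : ((1 - ρ * Δt) * β ^ 2 * βSum ^ 2 * σS ^ 4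
        - (2 - ρ * Δt + βSum * γ * Δt) * σK ^ 2 * σS ^ 2 * β * βSum
        + σK ^ 4 * (1 - β * γ * Δt)) * σS ^ 2 = 0 := by linear_combination -σS ^ 2 * heq
    have h2z := (mul_eq_zero.mp h).resolve_right (pow_ne_zero 2 hσS')
    linarith
  -- quadratic in x = 1 - φ
  have hpoly : (1 - ρ * Δt) * (1 - φ) ^ 2
      - (2 - ρ * Δt + βSum * γ * Δt) * (1 - φ) + 1 - β * γ * Δt = 0 := by
    have hK4 : (σK:ℝ) ^ 4 ≠ 0 := by positivity
    have h : σK ^ 4 * ((1 - ρ * Δt) * (1 - φ) ^ 2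
        - (2 - ρ * Δt + βSum * γ * Δt) * (1 - φ) + 1 - β * γ * Δt) = 0 := by
      linear_combination (-1 : ℝ) * heq2
        + ((1 - ρ * Δt) * ((1 - φ) * σK ^ 2 + β * βSum * σS ^ 2)
            - (2 - ρ * Δt + βSum * γ * Δt) * σK ^ 2) * hx
    exact (mul_eq_zero.mp h).resolve_left hK4
  -- key relation lam * Q = g * x
  have hkey : lam * ((1 - ρ * Δt) * (1 - φ) ^ 2 - (2 - ρ * Δt) * (1 - φ) + 1)
      = γ * Δt * (1 - φ) := by
    linear_combination lam * hpoly + (γ * Δt) * hlamβ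
  -- denominator of F positive
  have hD : (0:ℝ) < φ + (1 - φ) * (ζ * (1 - ρ * Δt) + ρ * Δt) := by
    have : (0:ℝ) < ζ * (1 - ρ * Δt) + ρ * Δt := by positivity
    nlinarith
  have hD' : φ + (1 - φ) * (ζ * (1 - ρ * Δt) + ρ * Δt) ≠ 0 := ne_of_gt hD
  rw [div_eq_div_iff h1r' hD'] at hF
  rw [eq_div_iff h1φ']
  have hgoal2 : (F + γ * Δt) * (1 - φ) * (φ + (1 - φ) * (ζ * (1 - ρ * Δt) + ρ * Δt))
      = lam * φ * (φ + (1 - φ) * (ζ * (1 - ρ * Δt) + ρ * Δt)) := by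
    linear_combination (1 - φ) * hF
      - ((1 - φ) * (1 - ρ * Δt) * (1 - ζ)
          + (φ + (1 - φ) * (ζ * (1 - ρ * Δt) + ρ * Δt))) * hkey
  have := mul_right_cancel₀ hD' hgoal2
  linarith [this]
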